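/- The infimum of w ↦ Σᵢ wᵢ·ℓᵢ over K_f is attained, and min_{w ∈ K_f} Σᵢ wᵢ·ℓᵢ = sup_{λ > 0, η ∈ ℝ} [ −(1/n)·Σᵢ λ·f*((η − ℓᵢ)/λ) + η − λ·ξ/n ], where the supremand is −∞ whenever some f*((η − ℓᵢ)/λ) = +∞. -/

import Mathlib

open Finset

noncomputable section

/-- The f-divergence ball of radius `ξ/n` around the uniform distribution on `n` points. -/
def Kf (f : ℝ → ℝ) (n : ℕ) (ξ : ℝ) : Set (Fin n → ℝ) :=
  {w : Fin n → ℝ | (∀ i, 0 ≤ w i) ∧ (∑ i, w i = 1) ∧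
    (1 / (n : ℝ)) * ∑ i, f ((n : ℝ) * w i) ≤ ξ / n}

/-- The convex conjugate of `f` restricted to the nonnegative half-line, with values
in the extended reals: `f*(y) = sup_{x ≥ 0} (x·y − f(x)) ∈ ℝ ∪ {+∞}`. -/
def fstar (f : ℝ → ℝ) (y : ℝ) : EReal :=
  ⨆ x : {x : ℝ // 0 ≤ x}, ((x.1 * y - f x.1 : ℝ) : EReal)

lemma coe_finset_sum' {ι : Type*} (s : Finset ι) (g : ι → ℝ) :
    ((∑ i ∈ s, g i : ℝ) : EReal) = ∑ i ∈ s, ((g i : ℝ) : EReal) := by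
  induction s using Finset.cons_induction with
  | empty => simp
  | cons a s ha ih => rw [Finset.sum_cons, Finset.sum_cons, EReal.coe_add, ih]

lemma le_fstar (f : ℝ → ℝ) (y : ℝ) {x : ℝ} (hx : 0 ≤ x) :
    ((x * y - f x : ℝ) : EReal) ≤ fstar f y :=
  le_iSup (fun z : {x : ℝ // 0 ≤ x} => ((z.1 * y - f z.1 : ℝ) : EReal)) ⟨x, hx⟩

section Main
variable {f : ℝ → ℝ} {n : ℕ} {ξ : ℝ} {ℓ : Fin n → ℝ}

lemma Kf_subset_stdSimplex : Kf f n ξ ⊆ stdSimplex ℝ (Fin n) :=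
  fun w hw => ⟨hw.1, hw.2.1⟩

lemma uniform_mem_Kf (hf1 : f 1 = 0) (hn : 1 ≤ n) (hξ : 0 < ξ) :
    (fun _ : Fin n => (n : ℝ)⁻¹) ∈ Kf f n ξ := by
  have hn0 : (0:ℝ) < n := by exact_mod_cast Nat.pos_of_ne_zero (by omega)
  refine ⟨fun i => by positivity, ?_, ?_⟩
  · simp [Finset.sum_const, mul_inv_cancel₀ hn0.ne']
  · have : ∀ i : Fin n, f ((n:ℝ) * (n:ℝ)⁻¹) = 0 := by
      intro i; rw [mul_inv_cancel₀ hn0.ne', hf1]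
    simp only [mul_inv_cancel₀ hn0.ne', hf1]
    simp only [Finset.sum_const, card_univ, Fintype.card_fin, nsmul_eq_mul, mul_zero]
    positivity

lemma isClosed_Kf (hlsc : LowerSemicontinuousOn f (Set.Ici 0)) (hn : 1 ≤ n) :
    IsClosed (Kf f n ξ) := by
  have hn0 : (0:ℝ) < n := by exact_mod_cast Nat.pos_of_ne_zero (by omega)
  rw [← closure_subset_iff_isClosed]
  intro w hw
  set D : Set (Fin n → ℝ) := {v | ∀ i, 0 ≤ v i} with hD
  have hsub : Kf f n ξ ⊆ D := fun v hv => hv.1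
  have hwD : w ∈ stdSimplex ℝ (Fin n) := by
    have := closure_mono (Kf_subset_stdSimplex (f := f) (n := n) (ξ := ξ))
    have h2 := this hw
    rwa [(isClosed_stdSimplex ℝ (Fin n)).closure_eq] at h2
  refine ⟨hwD.1, hwD.2, ?_⟩
  by_contra hc
  push_neg at hc
  -- lower semicontinuity of the constraint function on D
  have hsc : LowerSemicontinuousWithinAt
      (fun v : Fin n → ℝ => (1 / (n:ℝ)) * ∑ i, f ((n:ℝ) * v i)) D w := by
    have hsum : LowerSemicontinuousWithinAt
        (fun v : Fin n → ℝ => ∑ i, f ((n:ℝ) * v i)) D w := by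
      apply lowerSemicontinuousWithinAt_sum
      intro i _
      intro y hy
      have hmem : (n:ℝ) * w i ∈ Set.Ici (0:ℝ) := mul_nonneg hn0.le (hwD.1 i)
      have hev := hlsc _ hmem y hy
      have hten : Filter.Tendsto (fun v : Fin n → ℝ => (n:ℝ) * v i)
          (nhdsWithin w D) (nhdsWithin ((n:ℝ) * w i) (Set.Ici 0)) := by
        apply ContinuousWithinAt.tendsto_nhdsWithin
        · exact (continuous_const.mul (continuous_apply i)).continuousWithinAt
        · intro v hv
          exact mul_nonneg hn0.le (hv i)
      exact hten.eventually hev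
    have hmono : Monotone (fun y : ℝ => (1 / (n:ℝ)) * y) := by
      intro a b hab
      exact mul_le_mul_of_nonneg_left hab (by positivity)
    exact (continuousAt_const.mul continuousAt_id).comp_lowerSemicontinuousWithinAt hsum hmono
  have hwD' : w ∈ D := fun i => hwD.1 i
  have hev := hsc _ hc
  have hle : nhdsWithin w (Kf f n ξ) ≤ nhdsWithin w D := nhdsWithin_mono w hsub
  have hev2 : ∀ᶠ x in nhdsWithin w (Kf f n ξ),
      ξ / n < (1 / (n:ℝ)) * ∑ i, f ((n:ℝ) * x i) := hle hev
  have hne : (nhdsWithin w (Kf f n ξ)).NeBot := mem_closure_iff_nhdsWithin_neBot.1 hw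
  have hev3 : ∀ᶠ x in nhdsWithin w (Kf f n ξ), x ∈ Kf f n ξ := self_mem_nhdsWithin
  obtain ⟨x, hx1, hx2⟩ := (hev2.and hev3).exists
  exact absurd hx2.2.2 (not_le.2 hx1)

lemma exists_min_Kf (hlsc : LowerSemicontinuousOn f (Set.Ici 0)) (hf1 : f 1 = 0)
    (hn : 1 ≤ n) (hξ : 0 < ξ) (ℓ : Fin n → ℝ) :
    ∃ w ∈ Kf f n ξ, ∀ v ∈ Kf f n ξ, ∑ i, w i * ℓ i ≤ ∑ i, v i * ℓ i := by
  have hcomp : IsCompact (Kf f n ξ) :=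
    (isCompact_stdSimplex ℝ (Fin n)).of_isClosed_subset (isClosed_Kf hlsc hn)
      Kf_subset_stdSimplex
  have hne : (Kf f n ξ).Nonempty := ⟨_, uniform_mem_Kf hf1 hn hξ⟩
  have hcont : Continuous (fun w : Fin n → ℝ => ∑ i, w i * ℓ i) :=
    continuous_finset_sum _ fun i _ => (continuous_apply i).mul continuous_const
  obtain ⟨w, hwK, hmin⟩ := hcomp.exists_isMinOn hne hcont.continuousOn
  exact ⟨w, hwK, fun v hv => hmin hv⟩

/-- Weak duality: every dual value is at most the primal value at any feasible point. -/
lemma dual_le (hn : 1 ≤ n) {lam η : ℝ} (hlam : 0 < lam) {w : Fin n → ℝ}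
    (hw0 : ∀ i, 0 ≤ w i) (hw1 : ∑ i, w i = 1)
    (hw2 : (1 / (n : ℝ)) * ∑ i, f ((n : ℝ) * w i) ≤ ξ / n) :
    ((η - lam * ξ / n : ℝ) : EReal) -
      ((1 / (n : ℝ) : ℝ) : EReal) * (∑ i, (lam : EReal) * fstar f ((η - ℓ i) / lam)) ≤
    ((∑ i, w i * ℓ i : ℝ) : EReal) := by
  have hn0 : (0:ℝ) < n := by exact_mod_cast Nat.pos_of_ne_zero (by omega)
  set g : Fin n → ℝ := fun i => (n:ℝ) * w i * (η - ℓ i) - lam * f ((n:ℝ) * w i) with hg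
  have hterm : ∀ i : Fin n, ((g i : ℝ) : EReal) ≤ (lam : EReal) * fstar f ((η - ℓ i) / lam) := by
    intro i
    have h1 : (((n:ℝ) * w i * ((η - ℓ i)/lam) - f ((n:ℝ) * w i) : ℝ) : EReal) ≤
        fstar f ((η - ℓ i) / lam) := le_fstar f _ (mul_nonneg hn0.le (hw0 i))
    have h2 := mul_le_mul_of_nonneg_left h1 (EReal.coe_nonneg.2 hlam.le)
    have hgi : g i = lam * ((n:ℝ) * w i * ((η - ℓ i)/lam) - f ((n:ℝ) * w i)) := by
      rw [hg]; field_simp; try ring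
    calc ((g i : ℝ) : EReal)
        = ((lam * ((n:ℝ) * w i * ((η - ℓ i)/lam) - f ((n:ℝ) * w i)) : ℝ) : EReal) := by
          rw [hgi]
      _ = (lam : EReal) * (((n:ℝ) * w i * ((η - ℓ i)/lam) - f ((n:ℝ) * w i) : ℝ) : EReal) := by
          rw [EReal.coe_mul]
      _ ≤ _ := h2
  have hsum : ((∑ i, g i : ℝ) : EReal) ≤ ∑ i, (lam : EReal) * fstar f ((η - ℓ i) / lam) := by
    rw [coe_finset_sum']
    exact Finset.sum_le_sum fun i _ => hterm i
  have hmul : (((1 / (n:ℝ)) * ∑ i, g i : ℝ) : EReal) ≤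
      ((1 / (n : ℝ) : ℝ) : EReal) * (∑ i, (lam : EReal) * fstar f ((η - ℓ i) / lam)) := by
    rw [EReal.coe_mul]
    exact mul_le_mul_of_nonneg_left hsum (EReal.coe_nonneg.2 (by positivity))
  have hstep : ((η - lam * ξ / n : ℝ) : EReal) -
      ((1 / (n : ℝ) : ℝ) : EReal) * (∑ i, (lam : EReal) * fstar f ((η - ℓ i) / lam)) ≤
      ((η - lam * ξ / n : ℝ) : EReal) - (((1 / (n:ℝ)) * ∑ i, g i : ℝ) : EReal) :=
    EReal.sub_le_sub (le_refl _) hmul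
  refine hstep.trans ?_
  rw [← EReal.coe_sub, EReal.coe_le_coe_iff]
  -- now a real inequality
  set P : ℝ := ∑ i, w i * ℓ i with hP
  set Q : ℝ := ∑ i, f ((n:ℝ) * w i) with hQ
  have hgsum : ∑ i, g i = (n:ℝ) * η * (∑ i, w i) - (n:ℝ) * P - lam * Q := by
    simp only [hg, hP, hQ, Finset.mul_sum]
    rw [← Finset.sum_sub_distrib, ← Finset.sum_sub_distrib]
    exact Finset.sum_congr rfl fun i _ => by ring
  rw [hgsum, hw1]
  have h3 : lam * ((1 / (n : ℝ)) * Q) ≤ lam * (ξ / n) :=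
    mul_le_mul_of_nonneg_left hw2 hlam.le
  have hexp : (1/(n:ℝ)) * ((n:ℝ) * η * 1 - (n:ℝ) * P - lam * Q)
      = η - P - lam * ((1/(n:ℝ)) * Q) := by
    field_simp
  rw [hexp]
  have h4 : lam * (ξ / (n:ℝ)) = lam * ξ / (n:ℝ) := by ring
  linarith

/-- From a uniform Lagrangian lower bound, a lower bound on the dual value. -/
lemma dual_ge (hn : 1 ≤ n) {lam η me : ℝ} (hlam : 0 < lam)
    (hL : ∀ w : Fin n → ℝ, (∀ i, 0 ≤ w i) →
      me ≤ ∑ i, w i * ℓ i + η * (1 - ∑ i, w i) +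
        lam * ((1 / (n:ℝ)) * ∑ i, f ((n:ℝ) * w i) - ξ / n)) :
    ((me : ℝ) : EReal) ≤ ((η - lam * ξ / n : ℝ) : EReal) -
      ((1 / (n : ℝ) : ℝ) : EReal) * (∑ i, (lam : EReal) * fstar f ((η - ℓ i) / lam)) := by
  have hn0 : (0:ℝ) < n := by exact_mod_cast Nat.pos_of_ne_zero (by omega)
  set y : Fin n → ℝ := fun i => (η - ℓ i) / lam with hy
  set R : ℝ := ((n:ℝ)/lam) * (η + lam * (((n:ℝ)-1) * f 0)/n - lam * ξ/n - me) with hR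
  -- Step 1: pointwise bound on the conjugate terms
  have hbound : ∀ i : Fin n, ∀ x : ℝ, 0 ≤ x → x * y i - f x ≤ R := by
    intro i x hx
    set w : Fin n → ℝ := fun j => if j = i then x / n else 0 with hw
    have hw0 : ∀ j, 0 ≤ w j := by
      intro j; rw [hw]; dsimp only; split
      · positivity
      · exact le_refl 0
    have hs2 : ∑ j, w j = x / n := by
      rw [hw]; simp [Finset.sum_ite_eq']
    have hs1 : ∑ j, w j * ℓ j = (x/n) * ℓ i := by
      rw [hw]
      have : ∀ j : Fin n, (if j = i then x/n else 0) * ℓ j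
          = if j = i then (x/n) * ℓ i else 0 := by
        intro j; by_cases h : j = i <;> simp [h]
      rw [Finset.sum_congr rfl fun j _ => this j, Finset.sum_ite_eq']
      simp
    have hxn : (n:ℝ) * (x/n) = x := by field_simp
    have hs3 : ∑ j, f ((n:ℝ) * w j) = f x + ((n:ℝ)-1) * f 0 := by
      rw [hw]
      have : ∀ j : Fin n, f ((n:ℝ) * (if j = i then x/n else 0))
          = f 0 + (if j = i then f x - f 0 else 0) := by
        intro j; by_cases h : j = i <;> simp [h, hxn]
      rw [Finset.sum_congr rfl fun j _ => this j, Finset.sum_add_distrib,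
        Finset.sum_const, Finset.sum_ite_eq']
      simp only [card_univ, Fintype.card_fin, nsmul_eq_mul, Finset.mem_univ, if_true]
      ring
    have hLw := hL w hw0
    rw [hs1, hs2, hs3] at hLw
    have key : (x/n) * (η - ℓ i) - (lam/n) * f x
        ≤ η + lam * (((n:ℝ)-1) * f 0)/n - lam * ξ/n - me := by
      have expand : lam * ((1/(n:ℝ)) * (f x + ((n:ℝ)-1) * f 0) - ξ/n)
          = (lam/n) * f x + lam * (((n:ℝ)-1) * f 0)/n - lam * ξ/n := by
        field_simp
      rw [expand] at hLw
      nlinarith [hLw]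
    have hmul := mul_le_mul_of_nonneg_left key (le_of_lt (div_pos hn0 hlam))
    calc x * y i - f x
        = ((n:ℝ)/lam) * ((x/n) * (η - ℓ i) - (lam/n) * f x) := by
          rw [hy]; field_simp
      _ ≤ R := by rw [hR]; exact hmul
  -- Step 2: the conjugates are finite, with real values r i
  have hup : ∀ i : Fin n, fstar f (y i) ≤ ((R : ℝ) : EReal) := by
    intro i
    refine iSup_le ?_
    rintro ⟨x, hx⟩
    exact EReal.coe_le_coe_iff.2 (hbound i x hx)
  have hlow : ∀ i : Fin n, ((0 * y i - f 0 : ℝ) : EReal) ≤ fstar f (y i) :=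
    fun i => le_fstar f (y i) (le_refl 0)
  set r : Fin n → ℝ := fun i => (fstar f (y i)).toReal with hr
  have hco : ∀ i : Fin n, fstar f (y i) = ((r i : ℝ) : EReal) := by
    intro i
    rw [hr]
    refine (EReal.coe_toReal ?_ ?_).symm
    · exact ne_top_of_le_ne_top (EReal.coe_ne_top R) (hup i)
    · intro h
      have hl := hlow i
      rw [h, le_bot_iff] at hl
      exact (EReal.coe_ne_bot _) hl
  -- Step 3: key real inequality
  have hkey : lam / n * (∑ i, r i) ≤ η - lam * ξ/n - me := by
    apply le_of_forall_pos_le_add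
    intro ε hε
    set δ : ℝ := ε / lam with hδ
    have hδpos : 0 < δ := by positivity
    -- choose near-optimal points
    have hchoose : ∀ i : Fin n, ∃ x : ℝ, 0 ≤ x ∧ r i - δ < x * y i - f x := by
      intro i
      have hlt : ((r i - δ : ℝ) : EReal) < fstar f (y i) := by
        rw [hco i]; exact_mod_cast sub_lt_self (r i) hδpos
      rw [fstar, lt_iSup_iff] at hlt
      obtain ⟨⟨x, hx⟩, hxlt⟩ := hlt
      exact ⟨x, hx, EReal.coe_lt_coe_iff.1 hxlt⟩
    choose x hx0 hxlt using hchoose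
    have hLw := hL (fun i => x i / n) (fun i => by have := hx0 i; positivity)
    have hxn : ∀ i : Fin n, (n:ℝ) * (x i / n) = x i := by intro i; field_simp
    simp only [hxn] at hLw
    set A : ℝ := ∑ i, x i * ℓ i with hA
    set B : ℝ := ∑ i, x i with hB
    set F : ℝ := ∑ i, f (x i) with hF
    have e1 : ∑ i, (x i / n) * ℓ i = (1/(n:ℝ)) * A := by
      rw [hA, Finset.mul_sum]; exact Finset.sum_congr rfl fun i _ => by ring
    have e2 : ∑ i, x i / (n:ℝ) = (1/(n:ℝ)) * B := by
      rw [hB, Finset.mul_sum]; exact Finset.sum_congr rfl fun i _ => by ring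
    rw [e1, e2] at hLw
    -- lower bound the Lagrangian sum by the r i
    have hsum_lb : ∑ i, (r i - δ) ≤ ∑ i, (x i * y i - f (x i)) :=
      Finset.sum_le_sum fun i _ => (hxlt i).le
    have hsum_expand : ∑ i, (x i * y i - f (x i))
        = (1/lam) * (η * B - A) - F := by
      have e : ∀ i : Fin n, x i * y i - f (x i)
          = (1/lam) * (η * x i) - (1/lam) * (x i * ℓ i) - f (x i) := by
        intro i; rw [hy]; field_simp
      rw [Finset.sum_congr rfl fun i _ => e i, Finset.sum_sub_distrib,
        Finset.sum_sub_distrib, ← Finset.mul_sum, ← Finset.mul_sum, ← Finset.mul_sum,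
        ← hA, ← hB, ← hF]
      ring
    have hsum_r : ∑ i, (r i - δ) = (∑ i, r i) - (n:ℝ) * δ := by
      rw [Finset.sum_sub_distrib, Finset.sum_const, card_univ, Fintype.card_fin,
        nsmul_eq_mul]
    rw [hsum_r, hsum_expand] at hsum_lb
    -- combine
    have hmul2 := mul_le_mul_of_nonneg_left hsum_lb (by positivity : (0:ℝ) ≤ lam / (n:ℝ))
    have hlamδ : lam * δ = ε := by rw [hδ]; field_simp
    have hrhs : lam/(n:ℝ) * ((1/lam) * (η * B - A) - F) ≤ η - lam * ξ/n - me := by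
      have hexpand : lam/(n:ℝ) * ((1/lam) * (η * B - A) - F)
          = (η * B - A)/n - lam * F/n := by field_simp
      rw [hexpand]
      have h2 : lam * ((1/(n:ℝ)) * F - ξ/n) = lam * F/n - lam * ξ/n := by
        field_simp
      rw [h2] at hLw
      have h3 : η * (1 - 1/(n:ℝ) * B) = η - η * B/n := by ring
      rw [h3] at hLw
      have h4 : (η * B - A)/(n:ℝ) = η * B/n - A/n := by ring
      have h5 : (1:ℝ)/(n:ℝ) * A = A/n := by ring
      rw [h5] at hLw
      rw [h4]
      linarith
    have final : lam/(n:ℝ) * ((∑ i, r i) - (n:ℝ) * δ) ≤ η - lam * ξ/n - me :=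
      le_trans hmul2 hrhs
    have hexp2 : lam/(n:ℝ) * ((∑ i, r i) - (n:ℝ) * δ)
        = lam/(n:ℝ) * (∑ i, r i) - lam * δ := by field_simp
    rw [hexp2, hlamδ] at final
    linarith
  -- Step 4: conclude in the extended reals
  calc ((me : ℝ) : EReal)
      ≤ ((η - lam * ξ/n - (1/(n:ℝ)) * ∑ i, lam * r i : ℝ) : EReal) := by
        rw [EReal.coe_le_coe_iff]
        have hh : (1/(n:ℝ)) * ∑ i, lam * r i = lam/(n:ℝ) * ∑ i, r i := by
          rw [← Finset.mul_sum]; ring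
        rw [hh]; linarith
    _ = ((η - lam * ξ / n : ℝ) : EReal) -
        ((1 / (n : ℝ) : ℝ) : EReal) * (∑ i, (lam : EReal) * fstar f ((η - ℓ i) / lam)) := by
        have hterm : ∀ i : Fin n,
            (lam : EReal) * fstar f ((η - ℓ i)/lam) = ((lam * r i : ℝ) : EReal) := by
          intro i
          rw [show (η - ℓ i)/lam = y i from by rw [hy], hco i, ← EReal.coe_mul]
        rw [Finset.sum_congr rfl fun i _ => hterm i, ← coe_finset_sum',
          ← EReal.coe_mul, ← EReal.coe_sub]

set_option maxHeartbeats 1000000 in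
/-- Separation step: a Lagrange multiplier pair with `lam₀ ≥ 0`. -/
lemma lagrange_weak (hconv : ConvexOn ℝ (Set.Ici 0) f) (hf1 : f 1 = 0)
    (hn : 1 ≤ n) (hξ : 0 < ξ) {m : ℝ}
    (hmin : ∀ v ∈ Kf f n ξ, m ≤ ∑ i, v i * ℓ i) :
    ∃ η lam₀ : ℝ, 0 ≤ lam₀ ∧ ∀ w : Fin n → ℝ, (∀ i, 0 ≤ w i) →
      m ≤ ∑ i, w i * ℓ i + η * (1 - ∑ i, w i) +
        lam₀ * ((1 / (n:ℝ)) * ∑ i, f ((n:ℝ) * w i) - ξ / n) := by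
  have hn0 : (0:ℝ) < n := by exact_mod_cast Nat.pos_of_ne_zero (by omega)
  set S : (Fin n → ℝ) → ℝ := fun w => ∑ i, w i with hS
  set c : (Fin n → ℝ) → ℝ := fun w => (1 / (n:ℝ)) * ∑ i, f ((n:ℝ) * w i) - ξ / n with hc
  set obj : (Fin n → ℝ) → ℝ := fun w => ∑ i, w i * ℓ i with hobj
  set C : Set (ℝ × ℝ × ℝ) :=
    {p | ∃ w : Fin n → ℝ, (∀ i, 0 ≤ w i) ∧ S w - 1 = p.1 ∧ c w < p.2.1 ∧
      obj w - m < p.2.2} with hC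
  -- convexity of C
  have hC_convex : Convex ℝ C := by
    intro p hp q hq a b ha hb hab
    obtain ⟨w, hw0, hw1, hw2, hw3⟩ := hp
    obtain ⟨v, hv0, hv1, hv2, hv3⟩ := hq
    refine ⟨fun i => a * w i + b * v i,
      fun i => add_nonneg (mul_nonneg ha (hw0 i)) (mul_nonneg hb (hv0 i)), ?_, ?_, ?_⟩
    · have h1 : (a • p + b • q).1 = a * p.1 + b * q.1 := by simp [smul_eq_mul]
      rw [h1, ← hw1, ← hv1]
      simp only [hS, Finset.sum_add_distrib, ← Finset.mul_sum]
      linarith [hab]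
    · have h1 : (a • p + b • q).2.1 = a * p.2.1 + b * q.2.1 := by simp [smul_eq_mul]
      rw [h1]
      have hcc : c (fun i => a * w i + b * v i) ≤ a * c w + b * c v := by
        have hterm : ∀ i : Fin n, f ((n:ℝ) * (a * w i + b * v i))
            ≤ a * f ((n:ℝ) * w i) + b * f ((n:ℝ) * v i) := by
          intro i
          have h2 := hconv.2 (Set.mem_Ici.2 (mul_nonneg hn0.le (hw0 i)))
            (Set.mem_Ici.2 (mul_nonneg hn0.le (hv0 i))) ha hb hab
          simp only [smul_eq_mul] at h2
          have h3 : (n:ℝ) * (a * w i + b * v i) = a * ((n:ℝ) * w i) + b * ((n:ℝ) * v i) := by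
            ring
          rw [h3]
          exact h2
        have h4 : ∑ i, f ((n:ℝ) * (a * w i + b * v i))
            ≤ a * ∑ i, f ((n:ℝ) * w i) + b * ∑ i, f ((n:ℝ) * v i) := by
          rw [Finset.mul_sum, Finset.mul_sum, ← Finset.sum_add_distrib]
          exact Finset.sum_le_sum fun i _ => hterm i
        have h5 := mul_le_mul_of_nonneg_left h4 (le_of_lt (by positivity : (0:ℝ) < 1 / (n:ℝ)))
        simp only [hc]
        have habξ : a * (ξ/(n:ℝ)) + b * (ξ/(n:ℝ)) = ξ/(n:ℝ) := by
          rw [← add_mul, hab, one_mul]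
        have e : a * (1/(n:ℝ) * ∑ i, f ((n:ℝ) * w i) - ξ/(n:ℝ))
            + b * (1/(n:ℝ) * ∑ i, f ((n:ℝ) * v i) - ξ/(n:ℝ))
            = 1/(n:ℝ) * (a * ∑ i, f ((n:ℝ) * w i) + b * ∑ i, f ((n:ℝ) * v i)) - ξ/(n:ℝ) := by
          linear_combination -habξ
        linarith [h5, e]
      have hfin : a * c w + b * c v < a * p.2.1 + b * q.2.1 := by
        rcases eq_or_lt_of_le ha with ha' | ha'
        · have hb1 : b = 1 := by linarith
          rw [← ha', hb1]; simpa using hv2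
        · have hb' : b * c v ≤ b * q.2.1 := mul_le_mul_of_nonneg_left hv2.le hb
          have ha'' : a * c w < a * p.2.1 := by exact (mul_lt_mul_iff_right₀ ha').2 hw2
          linarith
      linarith
    · have h1 : (a • p + b • q).2.2 = a * p.2.2 + b * q.2.2 := by simp [smul_eq_mul]
      rw [h1]
      have hoo : obj (fun i => a * w i + b * v i) = a * obj w + b * obj v := by
        simp only [hobj, Finset.mul_sum]
        rw [← Finset.sum_add_distrib]
        exact Finset.sum_congr rfl fun i _ => by ring
      have hfin : a * (obj w - m) + b * (obj v - m) < a * p.2.2 + b * q.2.2 := by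
        rcases eq_or_lt_of_le ha with ha' | ha'
        · have hb1 : b = 1 := by linarith
          rw [← ha', hb1]; simpa using hv3
        · have hb' : b * (obj v - m) ≤ b * q.2.2 := mul_le_mul_of_nonneg_left hv3.le hb
          have ha'' : a * (obj w - m) < a * p.2.2 := by exact (mul_lt_mul_iff_right₀ ha').2 hw3
          linarith
      have heq : obj (fun i => a * w i + b * v i) - m
          = a * (obj w - m) + b * (obj v - m) := by
        rw [hoo]; linear_combination m * hab
      linarith [hfin, heq]
  -- 0 is not in C
  have h0C : (0 : ℝ × ℝ × ℝ) ∉ C := by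
    rintro ⟨w, hw0, hw1, hw2, hw3⟩
    have hz1 : (0 : ℝ × ℝ × ℝ).1 = 0 := rfl
    have hz2 : (0 : ℝ × ℝ × ℝ).2.1 = 0 := rfl
    have hz3 : (0 : ℝ × ℝ × ℝ).2.2 = 0 := rfl
    rw [hz1] at hw1; rw [hz2] at hw2; rw [hz3] at hw3
    have hwK : w ∈ Kf f n ξ := by
      refine ⟨hw0, by simpa [hS] using (by linarith : S w = 1), ?_⟩
      have : c w < 0 := hw2
      simp only [hc] at this
      linarith
    have := hmin w hwK
    simp only [hobj] at hw3
    linarith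
  -- an interior point of C
  set Fmax : ℝ := max (f (1/2)) (f (3/2)) with hFmax
  set L0 : ℝ := ∑ i, ℓ i with hL0
  set V : ℝ := Fmax + 1 with hV
  set T : ℝ := 3 / (2*(n:ℝ)) * |L0| - m + 1 with hT
  set p₀ : ℝ × ℝ × ℝ := (0, V, T) with hp₀def
  have hball : Metric.ball p₀ (1/4) ⊆ C := by
    intro p hp
    rw [Metric.mem_ball, Prod.dist_eq, Prod.dist_eq] at hp
    rcases max_lt_iff.1 hp with ⟨hd1, hd2⟩
    rcases max_lt_iff.1 hd2 with ⟨hd3, hd4⟩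
    rw [Real.dist_eq] at hd1 hd3 hd4
    have hb1 : |p.1 - 0| < 1/4 := hd1
    have hb2 : |p.2.1 - V| < 1/4 := hd3
    have hb3 : |p.2.2 - T| < 1/4 := hd4
    rw [abs_lt] at hb1 hb2 hb3
    set z : ℝ := 1 + p.1 with hz
    have hz34 : 3/4 ≤ z := by simp only [hz]; linarith [hb1.1]
    have hz54 : z ≤ 5/4 := by simp only [hz]; linarith [hb1.2]
    refine ⟨fun _ => z / n, fun i => by positivity, ?_, ?_, ?_⟩
    · simp only [hS, Finset.sum_const, card_univ, Fintype.card_fin, nsmul_eq_mul]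
      have hnz : (n:ℝ) * (z/(n:ℝ)) = z := by field_simp
      rw [hnz, hz]; ring
    · -- constraint coordinate
      have hfz : f z ≤ Fmax := by
        set a : ℝ := 3/2 - z with hadef
        set b : ℝ := z - 1/2 with hbdef
        have ha : 0 ≤ a := by simp only [hadef]; linarith
        have hb : 0 ≤ b := by simp only [hbdef]; linarith
        have hab : a + b = 1 := by simp only [hadef, hbdef]; ring
        have h2 := hconv.2 (Set.mem_Ici.2 (by norm_num : (0:ℝ) ≤ 1/2))
          (Set.mem_Ici.2 (by norm_num : (0:ℝ) ≤ 3/2)) ha hb hab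
        simp only [smul_eq_mul] at h2
        have h3 : a * (1/2) + b * (3/2) = z := by simp only [hadef, hbdef]; ring
        rw [h3] at h2
        have h4 : a * f (1/2) ≤ a * Fmax :=
          mul_le_mul_of_nonneg_left (le_max_left _ _) ha
        have h5 : b * f (3/2) ≤ b * Fmax :=
          mul_le_mul_of_nonneg_left (le_max_right _ _) hb
        have h6 : a * Fmax + b * Fmax = Fmax := by rw [← add_mul, hab, one_mul]
        exact le_trans h2 (le_trans (add_le_add h4 h5) (le_of_eq h6))
      have hcz : c (fun _ => z / n) = f z - ξ / n := by
        simp only [hc]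
        have : (n:ℝ) * (z / n) = z := by field_simp
        simp only [this, Finset.sum_const, card_univ, Fintype.card_fin, nsmul_eq_mul]
        field_simp
      rw [hcz]
      have hξn : 0 < ξ / n := by positivity
      linarith [hb2.1, hfz]
    · -- objective coordinate
      have hoz : obj (fun _ => z / n) = z / n * L0 := by
        simp only [hobj, hL0, Finset.mul_sum]
      rw [hoz]
      have habs : z / n * L0 ≤ 3 / (2*(n:ℝ)) * |L0| := by
        have h1 : z / n * L0 ≤ z / n * |L0| :=
          mul_le_mul_of_nonneg_left (le_abs_self L0) (by positivity)
        have h2 : z / n * |L0| ≤ 3 / (2*(n:ℝ)) * |L0| := by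
          apply mul_le_mul_of_nonneg_right _ (abs_nonneg L0)
          rw [div_le_div_iff₀ hn0 (by positivity)]
          nlinarith
        linarith
      linarith [hb3.1, habs]
  have hp₀ : p₀ ∈ interior C := interior_maximal hball Metric.isOpen_ball
    (Metric.mem_ball_self (by norm_num))
  have hp₀C : p₀ ∈ C := interior_subset hp₀
  -- separation
  obtain ⟨φ, hφ⟩ := geometric_hahn_banach_open_point hC_convex.interior isOpen_interior
    (fun h => h0C (interior_subset h))
  have hφ0 : φ (0 : ℝ × ℝ × ℝ) = 0 := map_zero φ
  have hφint : ∀ p ∈ interior C, φ p < 0 := by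
    intro p hpmem; have := hφ p hpmem; rwa [hφ0] at this
  -- φ is ≤ 0 on all of C
  have hφC : ∀ p ∈ C, φ p ≤ 0 := by
    intro p hpmem
    by_contra hcon
    push_neg at hcon
    set d : ℝ := φ p with hd
    set qq : ℝ := |d - φ p₀| with hqq
    have hqq0 : 0 ≤ qq := abs_nonneg _
    set θ : ℝ := min 1 (d / (qq + 1)) with hθdef
    have hθpos : 0 < θ := lt_min one_pos (by positivity)
    have hθ1 : θ ≤ 1 := min_le_left _ _
    have hmemint : θ • p₀ + (1 - θ) • p ∈ interior C :=
      hC_convex.combo_interior_closure_mem_interior hp₀ (subset_closure hpmem)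
        hθpos (by linarith) (by ring)
    have hlt := hφint _ hmemint
    rw [map_add, map_smul, map_smul, smul_eq_mul, smul_eq_mul] at hlt
    -- θ * φ p₀ + (1 - θ) * d < 0
    have key : d < θ * (d - φ p₀) := by nlinarith [hlt]
    have k1 : θ * (d - φ p₀) ≤ θ * qq :=
      mul_le_mul_of_nonneg_left (le_abs_self _) hθpos.le
    have k2 : θ * qq ≤ d / (qq + 1) * qq :=
      mul_le_mul_of_nonneg_right (min_le_right _ _) hqq0
    have k3 : d / (qq + 1) * qq < d := by
      rw [div_mul_eq_mul_div, div_lt_iff₀ (by positivity)]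
      nlinarith
    linarith
  -- coordinates of φ
  set α : ℝ := φ (1, 0, 0) with hα
  set β : ℝ := φ (0, 1, 0) with hβ
  set γ : ℝ := φ (0, 0, 1) with hγ
  have hφ_eq : ∀ u v t : ℝ, φ (u, v, t) = u * α + v * β + t * γ := by
    intro u v t
    have hdecomp : (u, v, t) = u • ((1:ℝ),(0:ℝ),(0:ℝ)) + v • ((0:ℝ),(1:ℝ),(0:ℝ))
        + t • ((0:ℝ),(0:ℝ),(1:ℝ)) := by simp [Prod.ext_iff]
    rw [hdecomp, map_add, map_add, map_smul, map_smul, map_smul,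
      smul_eq_mul, smul_eq_mul, smul_eq_mul]
  -- witness from p₀ ∈ C
  obtain ⟨w₀, hw₀0, hw₀1, hw₀2, hw₀3⟩ := hp₀C
  -- β ≤ 0 and γ ≤ 0
  have hβle : β ≤ 0 := by
    by_contra hcon
    push_neg at hcon
    set R : ℝ := max 0 ((1 - V * β - T * γ) / β) with hR
    have hR0 : 0 ≤ R := le_max_left _ _
    have hmem : ((0:ℝ), V + R, T) ∈ C := by
      refine ⟨w₀, hw₀0, by simpa using hw₀1, ?_, by simpa using hw₀3⟩
      have : c w₀ < V := by simpa [hp₀def] using hw₀2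
      simp only []
      linarith
    have hle := hφC _ hmem
    rw [hφ_eq] at hle
    have hRβ : (1 - V * β - T * γ) / β * β ≤ R * β :=
      mul_le_mul_of_nonneg_right (le_max_right _ _) hcon.le
    rw [div_mul_cancel₀ _ (ne_of_gt hcon)] at hRβ
    nlinarith [hle]
  have hγle : γ ≤ 0 := by
    by_contra hcon
    push_neg at hcon
    set R : ℝ := max 0 ((1 - V * β - T * γ) / γ) with hR
    have hR0 : 0 ≤ R := le_max_left _ _
    have hmem : ((0:ℝ), V, T + R) ∈ C := by
      refine ⟨w₀, hw₀0, by simpa using hw₀1, by simpa using hw₀2, ?_⟩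
      have : obj w₀ - m < T := by simpa [hp₀def] using hw₀3
      simp only []
      linarith
    have hle := hφC _ hmem
    rw [hφ_eq] at hle
    have hRγ : (1 - V * β - T * γ) / γ * γ ≤ R * γ :=
      mul_le_mul_of_nonneg_right (le_max_right _ _) hcon.le
    rw [div_mul_cancel₀ _ (ne_of_gt hcon)] at hRγ
    nlinarith [hle]
  -- the main linear inequality on C
  have hmain : ∀ w : Fin n → ℝ, (∀ i, 0 ≤ w i) →
      α * (S w - 1) + β * c w + γ * (obj w - m) ≤ 0 := by
    intro w hw
    apply le_of_forall_pos_le_add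
    intro ε hε
    set N : ℝ := -(β + γ) with hN
    have hN0 : 0 ≤ N := by simp only [hN]; linarith
    set δ : ℝ := ε / (N + 1) with hδ
    have hδ0 : 0 < δ := by positivity
    have hmem : (S w - 1, c w + δ, obj w - m + δ) ∈ C :=
      ⟨w, hw, rfl, by simp only []; linarith, by simp only []; linarith⟩
    have hle := hφC _ hmem
    rw [hφ_eq] at hle
    have hNd : δ * N ≤ ε := by
      rw [hδ, div_mul_eq_mul_div, div_le_iff₀ (by positivity)]
      nlinarith
    nlinarith [hle]
  -- strict inequality at p₀
  have hstrict : V * β + T * γ < 0 := by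
    have := hφint p₀ hp₀
    rw [hp₀def, hφ_eq] at this
    linarith
  -- γ < 0
  have hγlt : γ < 0 := by
    rcases lt_or_eq_of_le hγle with h | h
    · exact h
    · exfalso
      -- γ = 0 forces β = 0 via the uniform distribution, contradicting hstrict
      have huni := hmain (fun _ => (n:ℝ)⁻¹) (fun i => by positivity)
      have hSu : S (fun _ : Fin n => (n:ℝ)⁻¹) = 1 := by
        simp only [hS, Finset.sum_const, card_univ, Fintype.card_fin, nsmul_eq_mul]
        field_simp
      have hcu : c (fun _ : Fin n => (n:ℝ)⁻¹) = -(ξ / n) := by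
        simp only [hc]
        have h1 : (n:ℝ) * (n:ℝ)⁻¹ = 1 := mul_inv_cancel₀ hn0.ne'
        simp only [h1, hf1, Finset.sum_const, card_univ, Fintype.card_fin,
          nsmul_eq_mul, mul_zero]
        ring
      rw [hSu, hcu, h] at huni
      ring_nf at huni
      have hβ0 : 0 ≤ β := by
        have hξn : 0 < ξ / (n:ℝ) := by positivity
        by_contra hb
        push_neg at hb
        have hprod : β * (ξ/(n:ℝ)) < 0 := mul_neg_of_neg_of_pos hb hξn
        ring_nf at hprod
        linarith [huni, hprod]
      have hβeq : β = 0 := le_antisymm hβle hβ0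
      rw [hβeq, h] at hstrict
      norm_num at hstrict
  -- normalize
  set G : ℝ := -γ with hG
  have hGpos : 0 < G := by simp only [hG]; linarith
  have hGne : G ≠ 0 := ne_of_gt hGpos
  have hγne : γ ≠ 0 := ne_of_lt hγlt
  refine ⟨α / G, -β / G, div_nonneg (by linarith [hβle]) hGpos.le, ?_⟩
  intro w hw
  have h' := hmain w hw
  have hexpand : ∑ i, w i * ℓ i + α / G * (1 - ∑ i, w i) +
      -β / G * ((1 / (n:ℝ)) * ∑ i, f ((n:ℝ) * w i) - ξ / n) - m
      = (G * (obj w - m) - α * (S w - 1) - β * c w) / G := by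
    simp only [hobj, hS, hc, hG]
    field_simp
    ring
  have hnum : 0 ≤ G * (obj w - m) - α * (S w - 1) - β * c w := by
    simp only [hG]; nlinarith [h']
  have := div_nonneg hnum hGpos.le
  linarith [hexpand ▸ this]

set_option maxHeartbeats 1000000 in
/-- Strict-multiplier Lagrangian bound, up to `ε`. -/
lemma lagrange_strict (hconv : ConvexOn ℝ (Set.Ici 0) f) (hf1 : f 1 = 0)
    (hn : 1 ≤ n) (hξ : 0 < ξ) {m : ℝ}
    (hmin : ∀ v ∈ Kf f n ξ, m ≤ ∑ i, v i * ℓ i) {ε : ℝ} (hε : 0 < ε) :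
    ∃ lam η' : ℝ, 0 < lam ∧ ∀ w : Fin n → ℝ, (∀ i, 0 ≤ w i) →
      m - ε ≤ ∑ i, w i * ℓ i + η' * (1 - ∑ i, w i) +
        lam * ((1 / (n:ℝ)) * ∑ i, f ((n:ℝ) * w i) - ξ / n) := by
  have hn0 : (0:ℝ) < n := by exact_mod_cast Nat.pos_of_ne_zero (by omega)
  obtain ⟨η, lam₀, hlam₀, h0⟩ := lagrange_weak hconv hf1 hn hξ hmin
  set s0 : ℝ := f 2 with hs0
  set K : ℝ := max (f 0) (f 2) with hKdef
  have hK : 0 ≤ K := by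
    have h2 := hconv.2 (Set.mem_Ici.2 (le_refl (0:ℝ)))
      (Set.mem_Ici.2 (by norm_num : (0:ℝ) ≤ 2))
      (by norm_num : (0:ℝ) ≤ 1/2) (by norm_num : (0:ℝ) ≤ 1/2) (by norm_num)
    simp only [smul_eq_mul] at h2
    have harg : (1/2 : ℝ) * 0 + (1/2 : ℝ) * 2 = 1 := by norm_num
    rw [harg, hf1] at h2
    have := le_max_left (f 0) (f 2)
    have := le_max_right (f 0) (f 2)
    simp only [hKdef]
    linarith
  set B : ℝ := K + |s0| with hBdef
  have hB : 0 ≤ B := by simp only [hBdef]; linarith [abs_nonneg s0]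
  have hlb : ∀ x : ℝ, 0 ≤ x → s0 * (x - 1) - B ≤ f x := by
    intro x hx
    rcases le_or_gt x 2 with hx2 | hx2
    · -- lower bound -K on [0,2]
      have h2x : (0:ℝ) ≤ 2 - x := by linarith
      have hub : f (2 - x) ≤ K := by
        have ha : (0:ℝ) ≤ x/2 := by linarith
        have hb : (0:ℝ) ≤ (2-x)/2 := by linarith
        have hab : x/2 + (2-x)/2 = 1 := by ring
        have h2 := hconv.2 (Set.mem_Ici.2 (le_refl (0:ℝ)))
          (Set.mem_Ici.2 (by norm_num : (0:ℝ) ≤ 2)) ha hb hab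
        simp only [smul_eq_mul] at h2
        have harg : x/2 * 0 + (2-x)/2 * 2 = 2 - x := by ring
        rw [harg] at h2
        have c1 : x/2 * f 0 ≤ x/2 * K := mul_le_mul_of_nonneg_left (le_max_left _ _) ha
        have c2 : (2-x)/2 * f 2 ≤ (2-x)/2 * K :=
          mul_le_mul_of_nonneg_left (le_max_right _ _) hb
        have c3 : x/2 * K + (2-x)/2 * K = K := by ring
        linarith
      have hmid := hconv.2 (Set.mem_Ici.2 hx) (Set.mem_Ici.2 h2x)
        (by norm_num : (0:ℝ) ≤ 1/2) (by norm_num : (0:ℝ) ≤ 1/2) (by norm_num)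
      simp only [smul_eq_mul] at hmid
      have harg : (1/2:ℝ) * x + (1/2:ℝ) * (2 - x) = 1 := by ring
      rw [harg, hf1] at hmid
      -- f x ≥ -K
      have hfx : -K ≤ f x := by linarith
      have habs1 : |x - 1| ≤ 1 := abs_le.2 ⟨by linarith, by linarith⟩
      have habs2 : s0 * (x - 1) ≤ |s0| := by
        calc s0 * (x - 1) ≤ |s0 * (x - 1)| := le_abs_self _
          _ = |s0| * |x - 1| := abs_mul _ _
          _ ≤ |s0| * 1 := mul_le_mul_of_nonneg_left habs1 (abs_nonneg s0)
          _ = |s0| := mul_one _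
      simp only [hBdef]
      linarith
    · -- slope bound beyond 2
      have hx1 : (1:ℝ) < x - 1 := by linarith
      have hx1p : (0:ℝ) < x - 1 := by linarith
      have ha : (0:ℝ) ≤ (x-2)/(x-1) := div_nonneg (by linarith) hx1p.le
      have hb : (0:ℝ) ≤ 1/(x-1) := by positivity
      have hab : (x-2)/(x-1) + 1/(x-1) = 1 := by field_simp; ring
      have h2 := hconv.2 (Set.mem_Ici.2 (by norm_num : (0:ℝ) ≤ 1))
        (Set.mem_Ici.2 hx) ha hb hab
      simp only [smul_eq_mul] at h2
      have harg : (x-2)/(x-1) * 1 + 1/(x-1) * x = 2 := by field_simp; ring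
      rw [harg, hf1, mul_zero, zero_add] at h2
      -- h2 : f 2 ≤ 1/(x-1) * f x
      have h3 := mul_le_mul_of_nonneg_right h2 hx1p.le
      have h4 : 1/(x-1) * f x * (x-1) = f x := by field_simp
      rw [h4] at h3
      -- h3 : f 2 * (x-1) ≤ f x
      simp only [hs0] at *
      linarith [hB]
  -- lower bound on the constraint function
  have hclb : ∀ w : Fin n → ℝ, (∀ i, 0 ≤ w i) →
      s0 * ((∑ i, w i) - 1) - B ≤ (1 / (n:ℝ)) * ∑ i, f ((n:ℝ) * w i) := by
    intro w hw
    have hterm : ∀ i : Fin n, s0 * (n:ℝ) * w i - (s0 + B) ≤ f ((n:ℝ) * w i) := by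
      intro i
      have := hlb ((n:ℝ) * w i) (mul_nonneg hn0.le (hw i))
      nlinarith [this]
    have hsum : ∑ i, (s0 * (n:ℝ) * w i - (s0 + B)) ≤ ∑ i, f ((n:ℝ) * w i) :=
      Finset.sum_le_sum fun i _ => hterm i
    have hls : ∑ i, (s0 * (n:ℝ) * w i - (s0 + B))
        = s0 * (n:ℝ) * (∑ i, w i) - (n:ℝ) * (s0 + B) := by
      rw [Finset.sum_sub_distrib, ← Finset.mul_sum, Finset.sum_const, card_univ,
        Fintype.card_fin, nsmul_eq_mul]
    rw [hls] at hsum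
    have := mul_le_mul_of_nonneg_left hsum (le_of_lt (by positivity : (0:ℝ) < 1/(n:ℝ)))
    have hexp : 1/(n:ℝ) * (s0 * (n:ℝ) * (∑ i, w i) - (n:ℝ) * (s0 + B))
        = s0 * ((∑ i, w i) - 1) - B := by
      field_simp; ring
    rw [hexp] at this
    exact this
  set C₀ : ℝ := |s0| + s0 + B + ξ/n with hC₀def
  have habs0 : 0 ≤ |s0| + s0 := by linarith [neg_abs_le s0, abs_nonneg s0]
  have hC₀ : 0 ≤ C₀ := by
    have : 0 ≤ ξ/(n:ℝ) := by positivity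
    simp only [hC₀def]; linarith
  set lam' : ℝ := ε / (C₀ + 1) with hlam'def
  have hlam' : 0 < lam' := by positivity
  refine ⟨lam₀ + lam', η - lam' * |s0|, by positivity, ?_⟩
  intro w hw
  have h2 := h0 w hw
  have hSw0 : 0 ≤ ∑ i, w i := Finset.sum_nonneg fun i _ => hw i
  have h1a : 0 ≤ (|s0| + s0) * (∑ i, w i) := mul_nonneg habs0 hSw0
  have hcl := hclb w hw
  have hb2 : -C₀ ≤ |s0| * ((∑ i, w i) - 1) +
      ((1 / (n:ℝ)) * ∑ i, f ((n:ℝ) * w i) - ξ / n) := by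
    simp only [hC₀def]
    nlinarith [h1a, hcl]
  have h3 : lam' * (-C₀) ≤ lam' * (|s0| * ((∑ i, w i) - 1) +
      ((1 / (n:ℝ)) * ∑ i, f ((n:ℝ) * w i) - ξ / n)) :=
    mul_le_mul_of_nonneg_left hb2 hlam'.le
  have h4 : lam' * C₀ ≤ ε := by
    rw [hlam'def, div_mul_eq_mul_div, div_le_iff₀ (by positivity)]
    nlinarith [hC₀, hε]
  have hexpand : ∑ i, w i * ℓ i + (η - lam' * |s0|) * (1 - ∑ i, w i) +
      (lam₀ + lam') * ((1 / (n:ℝ)) * ∑ i, f ((n:ℝ) * w i) - ξ / n)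
      = (∑ i, w i * ℓ i + η * (1 - ∑ i, w i) +
          lam₀ * ((1 / (n:ℝ)) * ∑ i, f ((n:ℝ) * w i) - ξ / n))
        + lam' * (|s0| * ((∑ i, w i) - 1) +
          ((1 / (n:ℝ)) * ∑ i, f ((n:ℝ) * w i) - ξ / n)) := by
    ring
  rw [hexpand]
  have h6 : lam' * -C₀ = -(lam' * C₀) := by ring
  clear_value s0 K B C₀ lam'
  linarith [h2, h3, h4, h6]

end Main

set_option maxHeartbeats 1000000 in
/-- the infimum of `w ↦ Σᵢ wᵢ ℓᵢ` over `K_f` is attained, and the dual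
formula `min_{w ∈ K_f} Σᵢ wᵢ ℓᵢ = sup_{λ>0, η} [−(1/n)·Σᵢ λ·f*((η−ℓᵢ)/λ) + η − λ·ξ/n]`
holds in the extended reals. -/
theorem stmt_10 (f : ℝ → ℝ) (hconv : ConvexOn ℝ (Set.Ici 0) f)
    (hlsc : LowerSemicontinuousOn f (Set.Ici 0)) (hf1 : f 1 = 0)
    (n : ℕ) (hn : 1 ≤ n) (ξ : ℝ) (hξ : 0 < ξ) (ℓ : Fin n → ℝ) :
    ∃ w ∈ Kf f n ξ, (∀ v ∈ Kf f n ξ, ∑ i, w i * ℓ i ≤ ∑ i, v i * ℓ i) ∧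
      ((∑ i, w i * ℓ i : ℝ) : EReal) =
        ⨆ (lam : ℝ) (_ : 0 < lam) (η : ℝ),
          ((η - lam * ξ / n : ℝ) : EReal) -
            ((1 / (n : ℝ) : ℝ) : EReal) * (∑ i, (lam : EReal) * fstar f ((η - ℓ i) / lam)) := by
  obtain ⟨w, hwK, hmin⟩ := exists_min_Kf hlsc hf1 hn hξ ℓ
  refine ⟨w, hwK, hmin, ?_⟩
  apply le_antisymm
  · -- primal min ≤ dual sup
    apply le_of_forall_lt
    intro cc hcc
    obtain ⟨x, hx1, hx2⟩ := EReal.exists_between_coe_real hcc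
    have hxm : x < ∑ i, w i * ℓ i := EReal.coe_lt_coe_iff.1 hx2
    obtain ⟨lam, η', hlam, hL⟩ := lagrange_strict hconv hf1 hn hξ hmin
      (show 0 < (∑ i, w i * ℓ i) - x by linarith)
    have hge := dual_ge (ℓ := ℓ) hn hlam hL
    have hxeq : ((∑ i, w i * ℓ i) - ((∑ i, w i * ℓ i) - x) : ℝ) = x := by ring
    rw [hxeq] at hge
    calc cc < ((x : ℝ) : EReal) := hx1
      _ ≤ ((η' - lam * ξ / n : ℝ) : EReal) -
            ((1 / (n : ℝ) : ℝ) : EReal) *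
              (∑ i, (lam : EReal) * fstar f ((η' - ℓ i) / lam)) := hge
      _ ≤ ⨆ (η : ℝ), ((η - lam * ξ / n : ℝ) : EReal) -
            ((1 / (n : ℝ) : ℝ) : EReal) *
              (∑ i, (lam : EReal) * fstar f ((η - ℓ i) / lam)) :=
          le_iSup (fun η => ((η - lam * ξ / n : ℝ) : EReal) -
            ((1 / (n : ℝ) : ℝ) : EReal) *
              (∑ i, (lam : EReal) * fstar f ((η - ℓ i) / lam))) η'
      _ ≤ ⨆ (_ : 0 < lam) (η : ℝ), ((η - lam * ξ / n : ℝ) : EReal) -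
            ((1 / (n : ℝ) : ℝ) : EReal) *
              (∑ i, (lam : EReal) * fstar f ((η - ℓ i) / lam)) :=
          le_iSup (fun _ : 0 < lam => ⨆ (η : ℝ), ((η - lam * ξ / n : ℝ) : EReal) -
            ((1 / (n : ℝ) : ℝ) : EReal) *
              (∑ i, (lam : EReal) * fstar f ((η - ℓ i) / lam))) hlam
      _ ≤ _ :=
          le_iSup (fun lam => ⨆ (_ : 0 < lam) (η : ℝ), ((η - lam * ξ / n : ℝ) : EReal) -
            ((1 / (n : ℝ) : ℝ) : EReal) *
              (∑ i, (lam : EReal) * fstar f ((η - ℓ i) / lam))) lam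
  · -- dual sup ≤ primal min (weak duality)
    refine iSup_le fun lam => iSup_le fun hlam => iSup_le fun η => ?_
    exact dual_le hn hlam hwK.1 hwK.2.1 hwK.2.2
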